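/- Suppose b = 1, ε, a, ω₀, τ₀ are real with ω₀ > 0, τ₀ ≠ 0, Δ(iω₀, τ₀) = 0, ω₀² = 2 − ε² + a², and exp(iω₀τ₀) ≠ 1, and set σ = iω₀/(1 − exp(iω₀τ₀)). Then the bilinear pairing of ψ₁(s) = (1, σ)·exp(iω₀τ₀s) with φ₁(θ) = (1, iω₀)ᵀ·exp(iω₀τ₀θ) vanishes: (1, σ)·(1, iω₀)ᵀ + ∫₋₁⁰ (1, σ)·exp(iω₀τ₀(ξ + 1))·𝔹·(1, iω₀)ᵀ·exp(iω₀τ₀ξ) dξ = 0. -/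

import Mathlib

open Complex Matrix

/-- The characteristic function Δ(λ, τ) = λ² − ελ + 1 − (aλ + b)·exp(−λτ) of the
linearized van der Pol equation with delayed feedback. -/
noncomputable def charFn (ε a b τ : ℝ) (lam : ℂ) : ℂ :=
  lam ^ 2 - (ε : ℂ) * lam + 1 - ((a : ℂ) * lam + (b : ℂ)) * Complex.exp (-lam * (τ : ℂ))

/-- The delay coefficient matrix 𝔹 = [[0, 0], [τ₀, aτ₀]] of the time-rescaled
linearized delayed van der Pol system. -/
noncomputable def Bmat (a τ₀ : ℝ) : Matrix (Fin 2) (Fin 2) ℂ :=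
  !![0, 0; (τ₀ : ℂ), (a : ℂ) * (τ₀ : ℂ)]

/-- Under the Zero-Hopf conditions (b = 1, Δ(iω₀, τ₀) = 0, ω₀² = 2 − ε² + a²,
exp(iω₀τ₀) ≠ 1) with σ = iω₀/(1 − exp(iω₀τ₀)), the bilinear pairing of
ψ₁(s) = (1, σ)·exp(iω₀τ₀s) with φ₁(θ) = (1, iω₀)ᵀ·exp(iω₀τ₀θ) vanishes. -/
theorem pairing_psi1_phi1_eq_zero (ε a ω₀ τ₀ : ℝ) (σ : ℂ)
    (hω : 0 < ω₀) (hτ : τ₀ ≠ 0)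
    (h : charFn ε a 1 τ₀ (Complex.I * (ω₀ : ℂ)) = 0)
    (hω2 : ω₀ ^ 2 = 2 - ε ^ 2 + a ^ 2)
    (hexp : Complex.exp (Complex.I * (ω₀ : ℂ) * (τ₀ : ℂ)) ≠ 1)
    (hσ : σ = Complex.I * (ω₀ : ℂ) / (1 - Complex.exp (Complex.I * (ω₀ : ℂ) * (τ₀ : ℂ)))) :
    (![1, σ] ⬝ᵥ ![1, Complex.I * (ω₀ : ℂ)])
      + (∫ ξ in (-1 : ℝ)..0,
          Complex.exp (Complex.I * (ω₀ : ℂ) * (τ₀ : ℂ) * ((ξ : ℂ) + 1))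
            * (Matrix.vecMul ![1, σ] (Bmat a τ₀) ⬝ᵥ ![1, Complex.I * (ω₀ : ℂ)])
            * Complex.exp (Complex.I * (ω₀ : ℂ) * (τ₀ : ℂ) * (ξ : ℂ))) = 0 := by
  set w : ℂ := Complex.I * (ω₀ : ℂ) with hw
  set c : ℂ := w * (τ₀ : ℂ) with hc
  set E : ℂ := Complex.exp c with hE
  have hw0 : w ≠ 0 := by
    simp [hw, Complex.ext_iff, hω.ne']
  have hc0 : c ≠ 0 := by
    simp only [hc, mul_ne_zero_iff]
    exact ⟨hw0, Complex.ofReal_ne_zero.mpr hτ⟩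
  have hE0 : E ≠ 0 := Complex.exp_ne_zero c
  have h1E : (1 : ℂ) - E ≠ 0 := by
    rw [sub_ne_zero]
    exact fun hh => hexp hh.symm
  -- the constant in the integrand
  set C : ℂ := Matrix.vecMul ![1, σ] (Bmat a τ₀) ⬝ᵥ ![1, w] with hC
  have hCval : C = σ * (τ₀ : ℂ) * (1 + (a : ℂ) * w) := by
    simp [hC, Bmat, Matrix.vecMul, dotProduct, Fin.sum_univ_two]
    ring
  -- compute the integral
  have hint : (∫ ξ in (-1 : ℝ)..0,
      Complex.exp (c * ((ξ : ℂ) + 1)) * C * Complex.exp (c * (ξ : ℂ)))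
      = C * E * (1 - (E^2)⁻¹) / (2 * c) := by
    have : ∀ ξ : ℝ, Complex.exp (c * ((ξ : ℂ) + 1)) * C * Complex.exp (c * (ξ : ℂ))
        = (C * E) * Complex.exp ((2 * c) * (ξ : ℂ)) := by
      intro ξ
      have e1 : Complex.exp (c * ((ξ : ℂ) + 1)) * Complex.exp (c * (ξ : ℂ))
          = Complex.exp c * Complex.exp ((2 * c) * (ξ : ℂ)) := by
        rw [← Complex.exp_add, ← Complex.exp_add]
        ring_nf
      rw [hE]
      linear_combination C * e1
    simp only [this]
    rw [intervalIntegral.integral_const_mul, integral_exp_mul_complex (by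
      exact mul_ne_zero two_ne_zero hc0)]
    have h2 : Complex.exp (2 * c * ((-1 : ℝ) : ℂ)) = (E ^ 2)⁻¹ := by
      rw [hE, ← Complex.exp_nat_mul]
      push_cast
      rw [← Complex.exp_neg]
      ring_nf
    rw [h2]
    push_cast
    simp [mul_comm]
    ring
  -- key relation from the characteristic equation: a*w + 1 = E * K
  have hK : ((a : ℂ) * w + 1) = E * (1 + w^2 - (ε : ℂ) * w) := by
    have h' := h
    simp only [charFn] at h'
    have hinv : Complex.exp (-(w) * (τ₀ : ℂ)) = E⁻¹ := by
      rw [hE, ← Complex.exp_neg]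
      ring_nf
      rw [hc]
    rw [hw] at h' ⊢
    rw [← hw] at h' ⊢
    rw [hinv] at h'
    field_simp at h'
    push_cast at h'
    linear_combination -h'
  have hK0 : (1 + w^2 - (ε : ℂ) * w) ≠ 0 := by
    intro h0
    rw [h0, mul_zero] at hK
    have := congrArg Complex.re hK
    simp [hw] at this
  -- goal
  show (![1, σ] ⬝ᵥ ![1, w]) + _ = 0
  rw [hint]
  have hd : (![1, σ] ⬝ᵥ ![1, w]) = 1 + σ * w := by
    simp [dotProduct, Fin.sum_univ_two]
  -- complex versions of the real hypotheses
  have hsum : w^2 = -(((ω₀ : ℂ))^2) := by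
    rw [hw, mul_pow, Complex.I_sq]; ring
  have hω2c : ((ω₀ : ℂ))^2 = 2 - (ε : ℂ)^2 + (a : ℂ)^2 := by
    exact_mod_cast congrArg (Complex.ofReal) hω2
  set K : ℂ := 1 + w^2 - (ε : ℂ) * w with hKdef
  have hKmul : K * (2*(1-E) + 2*w^2 + (E^2-1)*K) = 0 := by
    linear_combination (2 - E*K - ((a:ℂ)*w+1)) * hK + w^2 * hsum + (-w^2) * hω2c
  have key : 2*(1-E) + 2*w^2 + (E^2-1)*K = 0 :=
    (mul_eq_zero.mp hKmul).resolve_left hK0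
  rw [hd, hCval, hσ]
  field_simp
  linear_combination (w * (τ₀ : ℂ) * E) * key
    + (w * (τ₀ : ℂ) * (E ^ 2 - 1)) * hK
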